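/- The group generated by the quaternionic matrices diag(i,i) and antidiag(j,j) = [[0,j],[j,0]] has order 8, and for every t ∈ [−1,1] the vector v_t = (1, t + √(1−t²)·i)ᵀ ∈ ℍ² is a common eigenvector of the group: for each generator g, g·v_t = v_t·λ for some quaternion λ (depending on g and t). In particular, antidiag(j,j)·v_t = v_t·(tj − √(1−t²)·k). -/

import Mathlib

noncomputable section
open Quaternion Matrix

abbrev HQ := ℍ[ℝ]
def qi : HQ := ⟨0,1,0,0⟩
def qj : HQ := ⟨0,0,1,0⟩
def qk : HQ := ⟨0,0,0,1⟩

/-- Inner product on the right ℍ-module ℍ^d. -/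
def inprod {d : ℕ} (v w : Fin d → HQ) : HQ := ∑ m, star (v m) * w m


/-- The continuous family of vectors v_t = (1, t + √(1−t²) i). -/
def vt (t : ℝ) : Fin 2 → HQ :=
  ![1, ((t : ℝ) : HQ) + ((Real.sqrt (1 - t ^ 2) : ℝ) : HQ) * qi]

/- Auxiliary material -/

lemma qii : qi * qi = -1 := by ext <;> simp [Quaternion.re_mul, Quaternion.imI_mul, Quaternion.imJ_mul, Quaternion.imK_mul] <;> simp [qi]
lemma qij : qi * qj = qk := by ext <;> simp [Quaternion.re_mul, Quaternion.imI_mul, Quaternion.imJ_mul, Quaternion.imK_mul] <;> simp [qi, qj, qk]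
lemma qji : qj * qi = -qk := by ext <;> simp [Quaternion.re_mul, Quaternion.imI_mul, Quaternion.imJ_mul, Quaternion.imK_mul] <;> simp [qi, qj, qk]
lemma qjj : qj * qj = -1 := by ext <;> simp [Quaternion.re_mul, Quaternion.imI_mul, Quaternion.imJ_mul, Quaternion.imK_mul] <;> simp [qj]
lemma qik : qi * qk = -qj := by ext <;> simp [Quaternion.re_mul, Quaternion.imI_mul, Quaternion.imJ_mul, Quaternion.imK_mul] <;> simp [qi, qj, qk]
lemma qki : qk * qi = qj := by ext <;> simp [Quaternion.re_mul, Quaternion.imI_mul, Quaternion.imJ_mul, Quaternion.imK_mul] <;> simp [qi, qj, qk]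
lemma qjk : qj * qk = qi := by ext <;> simp [Quaternion.re_mul, Quaternion.imI_mul, Quaternion.imJ_mul, Quaternion.imK_mul] <;> simp [qi, qj, qk]
lemma qkj : qk * qj = -qi := by ext <;> simp [Quaternion.re_mul, Quaternion.imI_mul, Quaternion.imJ_mul, Quaternion.imK_mul] <;> simp [qi, qj, qk]
lemma qkk : qk * qk = -1 := by ext <;> simp [Quaternion.re_mul, Quaternion.imI_mul, Quaternion.imJ_mul, Quaternion.imK_mul] <;> simp [qk]

abbrev MQ := Matrix (Fin 2) (Fin 2) HQ
def MA : MQ := !![qi, 0; 0, qi]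
def MB : MQ := !![0, qj; qj, 0]
def MC : MQ := !![0, qk; qk, 0]

lemma mAA : MA * MA = -1 := by
  refine Matrix.ext fun i j => ?_; fin_cases i <;> fin_cases j <;>
    simp [MA, Matrix.mul_apply, Fin.sum_univ_two, Matrix.one_apply, qii]
lemma mAB : MA * MB = MC := by
  refine Matrix.ext fun i j => ?_; fin_cases i <;> fin_cases j <;>
    simp [MA, MB, MC, Matrix.mul_apply, Fin.sum_univ_two, qij]
lemma mBA : MB * MA = -MC := by
  refine Matrix.ext fun i j => ?_; fin_cases i <;> fin_cases j <;>
    simp [MA, MB, MC, Matrix.mul_apply, Fin.sum_univ_two, qji]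
lemma mBB : MB * MB = -1 := by
  refine Matrix.ext fun i j => ?_; fin_cases i <;> fin_cases j <;>
    simp [MB, Matrix.mul_apply, Fin.sum_univ_two, Matrix.one_apply, qjj]
lemma mAC : MA * MC = -MB := by
  refine Matrix.ext fun i j => ?_; fin_cases i <;> fin_cases j <;>
    simp [MA, MB, MC, Matrix.mul_apply, Fin.sum_univ_two, qik]
lemma mCA : MC * MA = MB := by
  refine Matrix.ext fun i j => ?_; fin_cases i <;> fin_cases j <;>
    simp [MA, MB, MC, Matrix.mul_apply, Fin.sum_univ_two, qki]
lemma mBC : MB * MC = MA := by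
  refine Matrix.ext fun i j => ?_; fin_cases i <;> fin_cases j <;>
    simp [MA, MB, MC, Matrix.mul_apply, Fin.sum_univ_two, qjk]
lemma mCB : MC * MB = -MA := by
  refine Matrix.ext fun i j => ?_; fin_cases i <;> fin_cases j <;>
    simp [MA, MB, MC, Matrix.mul_apply, Fin.sum_univ_two, qkj]
lemma mCC : MC * MC = -1 := by
  refine Matrix.ext fun i j => ?_; fin_cases i <;> fin_cases j <;>
    simp [MC, Matrix.mul_apply, Fin.sum_univ_two, Matrix.one_apply, qkk]

lemma mne {X Y : MQ} (i j : Fin 2) (h : X i j ≠ Y i j) : X ≠ Y := fun e => h (by rw [e])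

lemma nm0 : (1:MQ) ∉ ({-1, MA, -MA, MB, -MB, MC, -MC} : Set MQ) := by
  simp only [Set.mem_insert_iff, Set.mem_singleton_iff]; push_neg
  exact ⟨mne 0 0 (by simp [Matrix.one_apply, MA, MB, MC]; rw [Quaternion.ext_iff]; norm_num [Quaternion.re_neg, Quaternion.imI_neg, Quaternion.imJ_neg, Quaternion.imK_neg] <;> norm_num [qi, qj, qk]), mne 0 0 (by simp [Matrix.one_apply, MA, MB, MC]; rw [Quaternion.ext_iff]; norm_num [Quaternion.re_neg, Quaternion.imI_neg, Quaternion.imJ_neg, Quaternion.imK_neg] <;> norm_num [qi, qj, qk]), mne 0 0 (by simp [Matrix.one_apply, MA, MB, MC]; rw [Quaternion.ext_iff]; norm_num [Quaternion.re_neg, Quaternion.imI_neg, Quaternion.imJ_neg, Quaternion.imK_neg] <;> norm_num [qi, qj, qk]), mne 0 1 (by simp [Matrix.one_apply, MA, MB, MC]; rw [Quaternion.ext_iff]; norm_num [Quaternion.re_neg, Quaternion.imI_neg, Quaternion.imJ_neg, Quaternion.imK_neg] <;> norm_num [qi, qj, qk]), mne 0 1 (by simp [Matrix.one_apply, MA,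 MB, MC]; rw [Quaternion.ext_iff]; norm_num [Quaternion.re_neg, Quaternion.imI_neg, Quaternion.imJ_neg, Quaternion.imK_neg] <;> norm_num [qi, qj, qk]), mne 0 1 (by simp [Matrix.one_apply, MA, MB, MC]; rw [Quaternion.ext_iff]; norm_num [Quaternion.re_neg, Quaternion.imI_neg, Quaternion.imJ_neg, Quaternion.imK_neg] <;> norm_num [qi, qj, qk]), mne 0 1 (by simp [Matrix.one_apply, MA, MB, MC]; rw [Quaternion.ext_iff]; norm_num [Quaternion.re_neg, Quaternion.imI_neg, Quaternion.imJ_neg, Quaternion.imK_neg] <;> norm_num [qi, qj, qk])⟩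

lemma nm1 : (-1:MQ) ∉ ({MA, -MA, MB, -MB, MC, -MC} : Set MQ) := by
  simp only [Set.mem_insert_iff, Set.mem_singleton_iff]; push_neg
  exact ⟨mne 0 0 (by simp [Matrix.one_apply, MA, MB, MC]; rw [Quaternion.ext_iff]; norm_num [Quaternion.re_neg, Quaternion.imI_neg, Quaternion.imJ_neg, Quaternion.imK_neg] <;> norm_num [qi, qj, qk]), mne 0 0 (by simp [Matrix.one_apply, MA, MB, MC]; rw [Quaternion.ext_iff]; norm_num [Quaternion.re_neg, Quaternion.imI_neg, Quaternion.imJ_neg, Quaternion.imK_neg] <;> norm_num [qi, qj, qk]), mne 0 1 (by simp [Matrix.one_apply, MA, MB, MC]; rw [Quaternion.ext_iff]; norm_num [Quaternion.re_neg, Quaternion.imI_neg, Quaternion.imJ_neg, Quaternion.imK_neg] <;> norm_num [qi, qj, qk]), mne 0 1 (by simp [Matrix.one_apply, MA, MB, MC]; rw [Quaternion.ext_iff]; norm_num [Quaternion.re_neg, Quaternion.imI_neg, Quaternion.imJ_neg, Quaternion.imK_neg] <;> norm_num [qi, qj, qk]), mne 0 1 (by simp [Matrix.one_apply, MA, MB,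 MC]; rw [Quaternion.ext_iff]; norm_num [Quaternion.re_neg, Quaternion.imI_neg, Quaternion.imJ_neg, Quaternion.imK_neg] <;> norm_num [qi, qj, qk]), mne 0 1 (by simp [Matrix.one_apply, MA, MB, MC]; rw [Quaternion.ext_iff]; norm_num [Quaternion.re_neg, Quaternion.imI_neg, Quaternion.imJ_neg, Quaternion.imK_neg] <;> norm_num [qi, qj, qk])⟩

lemma nm2 : (MA:MQ) ∉ ({-MA, MB, -MB, MC, -MC} : Set MQ) := by
  simp only [Set.mem_insert_iff, Set.mem_singleton_iff]; push_neg
  exact ⟨mne 0 0 (by simp [Matrix.one_apply, MA, MB, MC]; rw [Quaternion.ext_iff]; norm_num [Quaternion.re_neg, Quaternion.imI_neg, Quaternion.imJ_neg, Quaternion.imK_neg] <;> norm_num [qi, qj, qk]), mne 0 1 (by simp [Matrix.one_apply, MA, MB, MC]; rw [Quaternion.ext_iff]; norm_num [Quaternion.re_neg, Quaternion.imI_neg, Quaternion.imJ_neg, Quaternion.imK_neg] <;> norm_num [qi, qj, qk]), mne 0 1 (by simp [Matrix.one_apply, MA, MB, MC]; rw [Quaternion.ext_iff]; norm_num [Quaternion.re_neg,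 Quaternion.imI_neg, Quaternion.imJ_neg, Quaternion.imK_neg] <;> norm_num [qi, qj, qk]), mne 0 1 (by simp [Matrix.one_apply, MA, MB, MC]; rw [Quaternion.ext_iff]; norm_num [Quaternion.re_neg, Quaternion.imI_neg, Quaternion.imJ_neg, Quaternion.imK_neg] <;> norm_num [qi, qj, qk]), mne 0 1 (by simp [Matrix.one_apply, MA, MB, MC]; rw [Quaternion.ext_iff]; norm_num [Quaternion.re_neg, Quaternion.imI_neg, Quaternion.imJ_neg, Quaternion.imK_neg] <;> norm_num [qi, qj, qk])⟩

lemma nm3 : (-MA:MQ) ∉ ({MB, -MB, MC, -MC} : Set MQ) := by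
  simp only [Set.mem_insert_iff, Set.mem_singleton_iff]; push_neg
  exact ⟨mne 0 1 (by simp [Matrix.one_apply, MA, MB, MC]; rw [Quaternion.ext_iff]; norm_num [Quaternion.re_neg, Quaternion.imI_neg, Quaternion.imJ_neg, Quaternion.imK_neg] <;> norm_num [qi, qj, qk]), mne 0 1 (by simp [Matrix.one_apply, MA, MB, MC]; rw [Quaternion.ext_iff]; norm_num [Quaternion.re_neg, Quaternion.imI_neg, Quaternion.imJ_neg, Quaternion.imK_neg] <;> norm_num [qi, qj, qk]), mne 0 1 (by simp [Matrix.one_apply, MA, MB, MC]; rw [Quaternion.ext_iff]; norm_num [Quaternion.re_neg, Quaternion.imI_neg, Quaternion.imJ_neg, Quaternion.imK_neg] <;> norm_num [qi, qj, qk]), mne 0 1 (by simp [Matrix.one_apply, MA, MB, MC]; rw [Quaternion.ext_iff]; norm_num [Quaternion.re_neg, Quaternion.imI_neg, Quaternion.imJ_neg, Quaternion.imK_neg] <;> norm_num [qi, qj, qk])⟩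

lemma nm4 : (MB:MQ) ∉ ({-MB, MC, -MC} : Set MQ) := by
  simp only [Set.mem_insert_iff, Set.mem_singleton_iff]; push_neg
  exact ⟨mne 0 1 (by simp [Matrix.one_apply, MA, MB, MC]; rw [Quaternion.ext_iff]; norm_num [Quaternion.re_neg, Quaternion.imI_neg, Quaternion.imJ_neg, Quaternion.imK_neg] <;> norm_num [qi, qj, qk]), mne 0 1 (by simp [Matrix.one_apply, MA, MB, MC]; rw [Quaternion.ext_iff]; norm_num [Quaternion.re_neg, Quaternion.imI_neg, Quaternion.imJ_neg, Quaternion.imK_neg] <;> norm_num [qi, qj, qk]), mne 0 1 (by simp [Matrix.one_apply, MA, MB, MC]; rw [Quaternion.ext_iff]; norm_num [Quaternion.re_neg, Quaternion.imI_neg, Quaternion.imJ_neg, Quaternion.imK_neg] <;> norm_num [qi, qj, qk])⟩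

lemma nm5 : (-MB:MQ) ∉ ({MC, -MC} : Set MQ) := by
  simp only [Set.mem_insert_iff, Set.mem_singleton_iff]; push_neg
  exact ⟨mne 0 1 (by simp [Matrix.one_apply, MA, MB, MC]; rw [Quaternion.ext_iff]; norm_num [Quaternion.re_neg, Quaternion.imI_neg, Quaternion.imJ_neg, Quaternion.imK_neg] <;> norm_num [qi, qj, qk]), mne 0 1 (by simp [Matrix.one_apply, MA, MB, MC]; rw [Quaternion.ext_iff]; norm_num [Quaternion.re_neg, Quaternion.imI_neg, Quaternion.imJ_neg, Quaternion.imK_neg] <;> norm_num [qi, qj, qk])⟩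

lemma nm6 : (MC:MQ) ∉ ({-MC} : Set MQ) := by
  simp only [Set.mem_insert_iff, Set.mem_singleton_iff]; push_neg
  exact mne 0 1 (by simp [Matrix.one_apply, MA, MB, MC]; rw [Quaternion.ext_iff]; norm_num [Quaternion.re_neg, Quaternion.imI_neg, Quaternion.imJ_neg, Quaternion.imK_neg] <;> norm_num [qi, qj, qk])


def Sset : Set MQ := {1, -1, MA, -MA, MB, -MB, MC, -MC}

def Smon : Submonoid MQ where
  carrier := Sset
  one_mem' := Set.mem_insert _ _
  mul_mem' := by
    intro a b ha hb
    simp only [Sset, Set.mem_insert_iff, Set.mem_singleton_iff] at ha hb ⊢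
    rcases ha with rfl|rfl|rfl|rfl|rfl|rfl|rfl|rfl <;>
      rcases hb with rfl|rfl|rfl|rfl|rfl|rfl|rfl|rfl <;>
        simp [mAA, mAB, mBA, mBB, mAC, mCA, mBC, mCB, mCC, neg_mul, mul_neg, neg_neg]

lemma Sncard : Sset.ncard = 8 := by
  rw [Sset, Set.ncard_insert_of_notMem nm0, Set.ncard_insert_of_notMem nm1,
    Set.ncard_insert_of_notMem nm2, Set.ncard_insert_of_notMem nm3,
    Set.ncard_insert_of_notMem nm4, Set.ncard_insert_of_notMem nm5,
    Set.ncard_insert_of_notMem nm6, Set.ncard_singleton]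

lemma closure_eq : Submonoid.closure ({MA, MB} : Set MQ) = Smon := by
  apply le_antisymm
  · rw [Submonoid.closure_le]
    intro x hx
    simp only [Set.mem_insert_iff, Set.mem_singleton_iff] at hx
    rcases hx with rfl | rfl
    · show MA ∈ Sset; simp [Sset]
    · show MB ∈ Sset; simp [Sset]
  · intro x hx
    have hA : MA ∈ Submonoid.closure ({MA, MB} : Set MQ) :=
      Submonoid.subset_closure (by simp)
    have hB : MB ∈ Submonoid.closure ({MA, MB} : Set MQ) :=
      Submonoid.subset_closure (by simp)
    have h1 : (-1 : MQ) ∈ Submonoid.closure ({MA, MB} : Set MQ) := mAA ▸ mul_mem hA hA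
    have hC : MC ∈ Submonoid.closure ({MA, MB} : Set MQ) := mAB ▸ mul_mem hA hB
    have hnC : -MC ∈ Submonoid.closure ({MA, MB} : Set MQ) := mBA ▸ mul_mem hB hA
    have hnA : -MA ∈ Submonoid.closure ({MA, MB} : Set MQ) := by
      have := mul_mem h1 hA; rwa [neg_one_mul] at this
    have hnB : -MB ∈ Submonoid.closure ({MA, MB} : Set MQ) := by
      have := mul_mem h1 hB; rwa [neg_one_mul] at this
    have hx' : x ∈ Sset := hx
    simp only [Sset, Set.mem_insert_iff, Set.mem_singleton_iff] at hx'
    rcases hx' with rfl|rfl|rfl|rfl|rfl|rfl|rfl|rfl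
    exacts [one_mem _, h1, hA, hnA, hB, hnB, hC, hnC]

/-- The group ⟨diag(i,i), antidiag(j,j)⟩ has order 8 and, for every
t ∈ [−1,1], v_t is a common (right) eigenvector of both generators;
in particular antidiag(j,j)·v_t = v_t·(tj − √(1−t²)k). -/
theorem continuous_family_of_eigenvectors :
    Nat.card (Submonoid.closure
      {(!![qi, 0; 0, qi] : Matrix (Fin 2) (Fin 2) HQ), !![0, qj; qj, 0]}) = 8 ∧
    (∀ t : ℝ, t ∈ Set.Icc (-1 : ℝ) 1 →
      (∃ lam : HQ, (!![qi, 0; 0, qi] : Matrix (Fin 2) (Fin 2) HQ).mulVec (vt t) =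
        fun m => vt t m * lam) ∧
      (∃ lam : HQ, (!![0, qj; qj, 0] : Matrix (Fin 2) (Fin 2) HQ).mulVec (vt t) =
        fun m => vt t m * lam) ∧
      (!![0, qj; qj, 0] : Matrix (Fin 2) (Fin 2) HQ).mulVec (vt t) =
        fun m => vt t m *
          (((t : ℝ) : HQ) * qj - ((Real.sqrt (1 - t ^ 2) : ℝ) : HQ) * qk)) := by
  constructor
  · have h : ({(!![qi, 0; 0, qi] : Matrix (Fin 2) (Fin 2) HQ), !![0, qj; qj, 0]} : Set MQ)
        = {MA, MB} := rfl
    rw [h, closure_eq]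
    have : Nat.card Smon = Sset.ncard := by
      rw [← Nat.card_coe_set_eq]
      exact Nat.card_congr (Equiv.subtypeEquivRight fun x => Iff.rfl)
    rw [this, Sncard]
  · intro t ht
    have h0 : (0:ℝ) ≤ 1 - t ^ 2 := by
      obtain ⟨h1, h2⟩ := ht; nlinarith
    have hs2 : Real.sqrt (1 - t ^ 2) ^ 2 = 1 - t ^ 2 := Real.sq_sqrt h0
    set s := Real.sqrt (1 - t ^ 2) with hs
    have key : (!![0, qj; qj, 0] : Matrix (Fin 2) (Fin 2) HQ).mulVec (vt t) =
        fun m => vt t m * (((t : ℝ) : HQ) * qj - ((s : ℝ) : HQ) * qk) := by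
      funext m; fin_cases m <;>
        · simp only [Matrix.mulVec, dotProduct, Fin.sum_univ_two, vt]
          ext <;>
            simp [Matrix.cons_val_zero, Matrix.cons_val_one] <;> simp [qi, qj, qk] <;>
            nlinarith [hs2]
    refine ⟨⟨qi, ?_⟩, ⟨((t : ℝ) : HQ) * qj - ((s : ℝ) : HQ) * qk, key⟩, key⟩
    funext m; fin_cases m <;>
      · simp only [Matrix.mulVec, dotProduct, Fin.sum_univ_two, vt]
        ext <;>
          simp [Matrix.cons_val_zero, Matrix.cons_val_one] <;> simp [qi, qj, qk] <;>
          ring
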